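/- Let f be a convex function on an interval J containing 0 with f(0) ≤ 0, and A an n×n Hermitian matrix with spectrum in J. Let Φ₁, …, Φ_ℓ be positive linear maps from M_n(ℂ) to M_m(ℂ) and α₁, …, α_ℓ ≥ 0 with 0 ≤ ∑_i α_i Φ_i(I_n) ≤ I_m. Then for each 1 ≤ k ≤ m, the sum of the k largest eigenvalues of f(∑_i α_i Φ_i(A)) is at most the sum of the k largest eigenvalues of ∑_i α_i Φ_i(f(A)). -/

import Mathlib

open Matrix ComplexOrder

noncomputable def matFun {n : ℕ} (f : ℝ → ℝ) (A : Matrix (Fin n) (Fin n) ℂ) :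
    Matrix (Fin n) (Fin n) ℂ :=
  if hA : A.IsHermitian then
    (hA.eigenvectorUnitary : Matrix (Fin n) (Fin n) ℂ) *
      Matrix.diagonal (fun i => (f (hA.eigenvalues i) : ℂ)) *
      (hA.eigenvectorUnitary : Matrix (Fin n) (Fin n) ℂ)ᴴ
  else 0

/-- `lam A j` : the `j`-th largest eigenvalue (0-indexed) of a Hermitian matrix `A`. -/
noncomputable def lam {n : ℕ} (A : Matrix (Fin n) (Fin n) ℂ) (j : ℕ) : ℝ :=
  if hA : A.IsHermitian then
    if h : j < n then (hA.eigenvalues ∘ Tuple.sort hA.eigenvalues) ((⟨j, h⟩ : Fin n).rev)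
    else 0
  else 0

/-- Loewner order. -/
def loewnerLE {n : ℕ} (A B : Matrix (Fin n) (Fin n) ℂ) : Prop := (B - A).PosSemidef

/-- `|B| = (B^* B)^{1/2}`. -/
noncomputable def matAbs {n : ℕ} (B : Matrix (Fin n) (Fin n) ℂ) : Matrix (Fin n) (Fin n) ℂ :=
  (Matrix.posSemidef_conjTranspose_mul_self B).isHermitian.eigenvectorUnitary.1 *
    Matrix.diagonal ((↑) ∘ fun i =>
      Real.sqrt ((Matrix.posSemidef_conjTranspose_mul_self B).isHermitian.eigenvalues i)) *
    (star (Matrix.posSemidef_conjTranspose_mul_self B).isHermitian.eigenvectorUnitary :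
      Matrix (Fin n) (Fin n) ℂ)

/-- `|B|^r` via functional calculus. -/
noncomputable def matAbsPow {n : ℕ} (B : Matrix (Fin n) (Fin n) ℂ) (r : ℝ) :
    Matrix (Fin n) (Fin n) ℂ :=
  matFun (fun t => t ^ r) (matAbs B)

set_option linter.unnecessarySimpa false
set_option linter.unusedVariables false

noncomputable def sortedDesc {m : ℕ} (d : Fin m → ℝ) (j : ℕ) : ℝ :=
  if h : j < m then (d ∘ Tuple.sort d) ((⟨j, h⟩ : Fin m).rev) else 0

lemma card_filter_lt_fin {m k : ℕ} (hk : k ≤ m) :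
    (Finset.univ.filter (fun p : Fin m => (p : ℕ) < k)).card = k := by
  rw [Finset.card_filter]
  rw [Fin.sum_univ_eq_sum_range (fun i => if i < k then 1 else 0)]
  rw [← Finset.card_filter]
  have : Finset.filter (fun i => i < k) (Finset.range m) = Finset.range k := by
    ext i
    simp only [Finset.mem_filter, Finset.mem_range]
    exact ⟨fun h => h.2, fun h => ⟨lt_of_lt_of_le h hk, h⟩⟩
  rw [this, Finset.card_range]

lemma bathtub {m k : ℕ} (hk : k ≤ m) (lam' : Fin m → ℝ)
    (hmono : ∀ p q : Fin m, p ≤ q → lam' q ≤ lam' p)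
    (c : Fin m → ℝ) (hc0 : ∀ p, 0 ≤ c p) (hc1 : ∀ p, c p ≤ 1)
    (hsum : ∑ p, c p = k) :
    ∑ p, c p * lam' p ≤
      ∑ p ∈ Finset.univ.filter (fun p : Fin m => (p : ℕ) < k), lam' p := by
  set χ : Fin m → ℝ := fun p => if (p : ℕ) < k then 1 else 0 with hχ
  have hχsum : ∑ p, χ p = k := by
    rw [hχ]
    simp only [Finset.sum_ite_mem]
    rw [Finset.sum_ite, Finset.sum_const, Finset.sum_const]
    simp [card_filter_lt_fin hk]
  have hRHS : ∑ p ∈ Finset.univ.filter (fun p : Fin m => (p : ℕ) < k), lam' p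
      = ∑ p, χ p * lam' p := by
    rw [Finset.sum_filter]
    congr 1; ext p
    by_cases h : (p : ℕ) < k <;> simp [hχ, h]
  rw [hRHS]
  rcases eq_or_lt_of_le hk with hkm | hkm
  · -- k = m : χ ≡ 1 and c ≡ 1
    have hχ1 : ∀ p : Fin m, χ p = 1 := fun p => by simp [hχ]; omega
    have hc : ∀ p : Fin m, c p = 1 := by
      by_contra hcon
      push_neg at hcon
      obtain ⟨p, hp⟩ := hcon
      have hlt : c p < 1 := lt_of_le_of_ne (hc1 p) hp
      have : ∑ q, c q < ∑ q : Fin m, (1:ℝ) :=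
        Finset.sum_lt_sum (fun q _ => hc1 q) ⟨p, Finset.mem_univ p, hlt⟩
      rw [hsum] at this
      simp [hkm] at this
    apply le_of_eq
    exact Finset.sum_congr rfl fun p _ => by rw [hc p, hχ1 p]
  · set t := lam' ⟨k, hkm⟩ with ht
    have key : ∀ p : Fin m, (c p - χ p) * (lam' p - t) ≤ 0 := by
      intro p
      by_cases h : (p : ℕ) < k
      · have h1 : χ p = 1 := by simp [hχ, h]
        have h2 : t ≤ lam' p := hmono p ⟨k, hkm⟩ (by simp [Fin.le_def]; omega)
        nlinarith [hc1 p]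
      · have h1 : χ p = 0 := by simp [hχ, h]
        have h2 : lam' p ≤ t := hmono ⟨k, hkm⟩ p (by simp [Fin.le_def]; omega)
        nlinarith [hc0 p]
    have hsum2 : ∑ p, (c p - χ p) * (lam' p - t) ≤ 0 :=
      Finset.sum_nonpos fun p _ => key p
    have expand : ∑ p, (c p - χ p) * (lam' p - t)
        = ∑ p, c p * lam' p - ∑ p, χ p * lam' p - t * (∑ p, c p - ∑ p, χ p) := by
      rw [mul_sub, Finset.mul_sum, Finset.mul_sum, ← Finset.sum_sub_distrib,
        ← Finset.sum_sub_distrib, ← Finset.sum_sub_distrib]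
      congr 1; ext p; ring
    rw [expand, hsum, hχsum] at hsum2
    linarith

lemma unitary_row_normSq {m : ℕ} {M : Matrix (Fin m) (Fin m) ℂ}
    (hM : M ∈ Matrix.unitaryGroup (Fin m) ℂ) (q : Fin m) :
    ∑ p, Complex.normSq (M q p) = 1 := by
  have h1 : (M * Mᴴ) q q = 1 := by
    rw [show M * Mᴴ = 1 from (Matrix.mem_unitaryGroup_iff).mp hM]; simp
  rw [Matrix.mul_apply] at h1
  have : ∑ p, ((Complex.normSq (M q p) : ℂ)) = 1 := by
    rw [← h1]; congr 1; ext p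
    rw [Matrix.conjTranspose_apply]; simp [Complex.mul_conj]
  exact_mod_cast this

lemma unitary_col_normSq {m : ℕ} {M : Matrix (Fin m) (Fin m) ℂ}
    (hM : M ∈ Matrix.unitaryGroup (Fin m) ℂ) (p : Fin m) :
    ∑ q, Complex.normSq (M q p) = 1 := by
  have h1 : (Mᴴ * M) p p = 1 := by
    rw [show Mᴴ * M = 1 from (Matrix.mem_unitaryGroup_iff').mp hM]; simp
  rw [Matrix.mul_apply] at h1
  have : ∑ q, ((Complex.normSq (M q p) : ℂ)) = 1 := by
    rw [← h1]; congr 1; ext q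
    rw [Matrix.conjTranspose_apply]; simp [mul_comm, Complex.mul_conj]
  exact_mod_cast this

lemma kyFan {m k : ℕ} (hk : k ≤ m) {M : Matrix (Fin m) (Fin m) ℂ}
    (hM : M ∈ Matrix.unitaryGroup (Fin m) ℂ) (d : Fin m → ℝ)
    (T : Finset (Fin m)) (hT : T.card = k) :
    ∑ q, (∑ p ∈ T, Complex.normSq (M q p)) * d q ≤
      ∑ j ∈ Finset.range k, sortedDesc d j := by
  set σ := Tuple.sort d with hσ
  set c : Fin m → ℝ := fun q => ∑ p ∈ T, Complex.normSq (M q p) with hc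
  set e : Equiv.Perm (Fin m) := (Fin.revPerm.trans σ) with he
  have hre : ∑ q, c q * d q = ∑ q', c (e q') * d (e q') :=
    (Equiv.sum_comp e (fun q => c q * d q)).symm
  rw [hre]
  have hmono : ∀ p q : Fin m, p ≤ q → d (e q) ≤ d (e p) := by
    intro p q hpq
    have : Fin.rev q ≤ Fin.rev p := Fin.rev_le_rev.mpr hpq
    exact Tuple.monotone_sort d this
  have hc0 : ∀ p, 0 ≤ c (e p) := fun p =>
    Finset.sum_nonneg fun _ _ => Complex.normSq_nonneg _
  have hc1 : ∀ p, c (e p) ≤ 1 := by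
    intro p
    calc c (e p) ≤ ∑ r, Complex.normSq (M (e p) r) :=
          Finset.sum_le_sum_of_subset_of_nonneg (Finset.subset_univ T)
            (fun _ _ _ => Complex.normSq_nonneg _)
      _ = 1 := unitary_row_normSq hM _
  have hcsum : ∑ p, c (e p) = k := by
    rw [Equiv.sum_comp e c, hc]
    rw [Finset.sum_comm]
    rw [Finset.sum_congr rfl fun p _ => unitary_col_normSq hM p]
    simp [hT]
  have hb := bathtub hk (fun q => d (e q)) hmono (fun q => c (e q)) hc0 hc1 hcsum
  refine hb.trans (le_of_eq ?_)
  refine Finset.sum_bij (fun p _ => (p : ℕ)) ?_ ?_ ?_ ?_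
  · intro p hp
    simp only [Finset.mem_filter, Finset.mem_univ, true_and] at hp
    exact Finset.mem_range.mpr hp
  · intro p hp q hq h
    exact Fin.ext h
  · intro j hj
    have hjm : j < m := lt_of_lt_of_le (Finset.mem_range.mp hj) hk
    exact ⟨⟨j, hjm⟩, by simp [Finset.mem_range.mp hj], rfl⟩
  · intro p hp
    simp only [sortedDesc, p.2, dif_pos]
    rfl

lemma conj_diag_entry {m : ℕ} (U V : Matrix (Fin m) (Fin m) ℂ) (d : Fin m → ℝ) (p : Fin m) :
    (Vᴴ * (U * Matrix.diagonal (fun q => (d q : ℂ)) * Uᴴ) * V) p p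
      = ((∑ q, Complex.normSq ((Uᴴ * V) q p) * d q : ℝ) : ℂ) := by
  set M := Uᴴ * V with hM
  have h1 : Vᴴ * (U * Matrix.diagonal (fun q => (d q : ℂ)) * Uᴴ) * V
      = Mᴴ * (Matrix.diagonal (fun q => (d q : ℂ)) * M) := by
    rw [hM, Matrix.conjTranspose_mul, Matrix.conjTranspose_conjTranspose]
    noncomm_ring [Matrix.mul_assoc]
  rw [h1, Matrix.mul_apply]
  push_cast
  congr 1; ext q
  rw [Matrix.diagonal_mul, Matrix.conjTranspose_apply]
  rw [Complex.normSq_eq_conj_mul_self]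
  simp only [Complex.star_def]
  ring

/-- Ky Fan principle in matrix form. -/
lemma kyFanMatrix {m k : ℕ} (hk : k ≤ m) {H U V : Matrix (Fin m) (Fin m) ℂ}
    (hU : U ∈ Matrix.unitaryGroup (Fin m) ℂ) (hV : V ∈ Matrix.unitaryGroup (Fin m) ℂ)
    (d : Fin m → ℝ)
    (hH : H = U * Matrix.diagonal (fun q => (d q : ℂ)) * Uᴴ)
    (T : Finset (Fin m)) (hT : T.card = k) :
    ∑ p ∈ T, ((Vᴴ * H * V) p p).re ≤ ∑ j ∈ Finset.range k, sortedDesc d j := by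
  have hM : Uᴴ * V ∈ Matrix.unitaryGroup (Fin m) ℂ := by
    rw [← Matrix.star_eq_conjTranspose]
    exact mul_mem (Unitary.star_mem hU) hV
  have h1 : ∀ p ∈ T, ((Vᴴ * H * V) p p).re = ∑ q, Complex.normSq ((Uᴴ * V) q p) * d q := by
    intro p _
    rw [hH, conj_diag_entry U V d p, Complex.ofReal_re]
  rw [Finset.sum_congr rfl h1]
  rw [Finset.sum_comm]
  have h2 : ∀ q, ∑ p ∈ T, Complex.normSq ((Uᴴ * V) q p) * d q
      = (∑ p ∈ T, Complex.normSq ((Uᴴ * V) q p)) * d q := by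
    intro q; rw [Finset.sum_mul]
  rw [Finset.sum_congr rfl fun q _ => h2 q]
  exact kyFan hk hM d T hT

lemma sortedDesc_topk_eq_subset_sum {m k : ℕ} (hk : k ≤ m) (d : Fin m → ℝ) :
    ∃ T : Finset (Fin m), T.card = k ∧
      ∑ j ∈ Finset.range k, sortedDesc d j = ∑ p ∈ T, d p := by
  set σ := Tuple.sort d with hσ
  set g : Fin m → Fin m := fun j => σ (Fin.rev j) with hg
  have hginj : Function.Injective g := by
    intro a b hab
    have := σ.injective hab
    exact Fin.rev_injective this
  refine ⟨(Finset.univ.filter (fun p : Fin m => (p : ℕ) < k)).image g, ?_, ?_⟩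
  · rw [Finset.card_image_of_injective _ hginj, card_filter_lt_fin hk]
  · rw [Finset.sum_image (fun a _ b _ h => hginj h)]
    refine Finset.sum_bij (fun (j : Fin m) _ => (j : ℕ)) ?_ ?_ ?_ ?_ |>.symm
    · intro p hp
      simp only [Finset.mem_filter, Finset.mem_univ, true_and] at hp
      exact Finset.mem_range.mpr hp
    · intro p _ q _ h; exact Fin.ext h
    · intro j hj
      have hjm : j < m := lt_of_lt_of_le (Finset.mem_range.mp hj) hk
      exact ⟨⟨j, hjm⟩, by simp [Finset.mem_range.mp hj], rfl⟩
    · intro p hp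
      simp only [sortedDesc, p.2, dif_pos]
      rfl

lemma conj_entry_nonneg {m : ℕ} {M : Matrix (Fin m) (Fin m) ℂ} (hM : M.PosSemidef)
    (V : Matrix (Fin m) (Fin m) ℂ) (p : Fin m) : 0 ≤ (Vᴴ * M * V) p p := by
  have h := hM.dotProduct_mulVec_nonneg (fun i => V i p)
  convert h using 1
  simp only [Matrix.mul_apply, Matrix.conjTranspose_apply, dotProduct, Matrix.mulVec,
    Pi.star_apply, Finset.sum_mul, Finset.mul_sum]
  rw [Finset.sum_comm]
  congr 1; ext i; congr 1; ext j; ring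

lemma posSemidef_real_smul {m : ℕ} {M : Matrix (Fin m) (Fin m) ℂ} (hM : M.PosSemidef)
    {a : ℝ} (ha : 0 ≤ a) : ((a : ℂ) • M).PosSemidef := by
  refine Matrix.PosSemidef.of_dotProduct_mulVec_nonneg ?_ ?_
  · have := hM.1
    rw [Matrix.IsHermitian, Matrix.conjTranspose_smul, this.eq]
    congr 1
    simp
  · intro x
    have h := hM.dotProduct_mulVec_nonneg x
    rw [Matrix.smul_mulVec, dotProduct_smul]
    rw [Complex.le_def] at h ⊢
    constructor
    · simp only [Complex.zero_re, smul_eq_mul, Complex.mul_re, Complex.ofReal_re,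
        Complex.ofReal_im, zero_mul, sub_zero]
      exact mul_nonneg ha h.1
    · simp only [Complex.zero_im, smul_eq_mul, Complex.mul_im, Complex.ofReal_re,
        Complex.ofReal_im, zero_mul, add_zero]
      rw [← h.2]; simp

lemma unitary_diag_eq_sum_rankOne {n : ℕ} (U : Matrix (Fin n) (Fin n) ℂ) (c : Fin n → ℂ) :
    U * Matrix.diagonal c * Uᴴ
      = ∑ r, c r • Matrix.of (fun i j => U i r * star (U j r)) := by
  ext i j
  rw [Matrix.sum_apply, Matrix.mul_apply]
  refine Finset.sum_congr rfl fun r _ => ?_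
  rw [Matrix.mul_diagonal, Matrix.conjTranspose_apply, Matrix.smul_apply, Matrix.of_apply,
    smul_eq_mul]
  ring

lemma rankOne_posSemidef {n : ℕ} (U : Matrix (Fin n) (Fin n) ℂ) (r : Fin n) :
    (Matrix.of (fun i j => U i r * star (U j r))).PosSemidef := by
  refine Matrix.PosSemidef.of_dotProduct_mulVec_nonneg ?_ ?_
  · ext i j
    simp [Matrix.conjTranspose_apply, mul_comm]
  · intro x
    have key : star x ⬝ᵥ (Matrix.of (fun i j => U i r * star (U j r)) *ᵥ x)
        = ((Complex.normSq (∑ i, star (x i) * U i r) : ℝ) : ℂ) := by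
      simp only [dotProduct, Matrix.mulVec, Pi.star_apply, Matrix.of_apply,
        Finset.mul_sum, Finset.sum_mul]
      rw [← Complex.mul_conj]
      rw [map_sum (starRingEnd ℂ) (fun i => star (x i) * U i r) Finset.univ]
      rw [Finset.sum_mul]
      refine Finset.sum_congr rfl fun i _ => ?_
      rw [Finset.mul_sum]
      refine Finset.sum_congr rfl fun j _ => ?_
      simp only [_root_.map_mul, Complex.star_def, Complex.conj_conj]
      ring
    rw [key]
    rw [Complex.le_def]
    simp [Complex.normSq_nonneg]

lemma sum_rankOne_eq_one {n : ℕ} {U : Matrix (Fin n) (Fin n) ℂ}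
    (hU : U ∈ Matrix.unitaryGroup (Fin n) ℂ) :
    ∑ r, Matrix.of (fun i j => U i r * star (U j r)) = (1 : Matrix (Fin n) (Fin n) ℂ) := by
  ext i j
  rw [Matrix.sum_apply]
  have h : (U * Uᴴ) i j = (1 : Matrix (Fin n) (Fin n) ℂ) i j := by
    rw [show U * Uᴴ = 1 from (Matrix.mem_unitaryGroup_iff).mp hU]
  rw [← h, Matrix.mul_apply]
  refine Finset.sum_congr rfl fun r _ => ?_
  rw [Matrix.conjTranspose_apply]
  rfl

lemma unitary_diag_decomp {n : ℕ} (U : Matrix (Fin n) (Fin n) ℂ) (d : Fin n → ℝ) :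
    ∃ P Q : Matrix (Fin n) (Fin n) ℂ, P.PosSemidef ∧ Q.PosSemidef ∧
      U * Matrix.diagonal (fun r => (d r : ℂ)) * Uᴴ = P - Q := by
  refine ⟨U * Matrix.diagonal (fun r => ((max (d r) 0 : ℝ) : ℂ)) * Uᴴ,
    U * Matrix.diagonal (fun r => ((max (-d r) 0 : ℝ) : ℂ)) * Uᴴ, ?_, ?_, ?_⟩
  · exact (Matrix.PosSemidef.diagonal (fun r => by
      simpa using Complex.zero_le_real.mpr (le_max_right (d r) 0))).mul_mul_conjTranspose_same U
  · exact (Matrix.PosSemidef.diagonal (fun r => by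
      simpa using Complex.zero_le_real.mpr (le_max_right (-d r) 0))).mul_mul_conjTranspose_same U
  · have hd : Matrix.diagonal (fun r => (d r : ℂ))
        = Matrix.diagonal (fun r => ((max (d r) 0 : ℝ) : ℂ))
          - Matrix.diagonal (fun r => ((max (-d r) 0 : ℝ) : ℂ)) := by
      rw [Matrix.diagonal_sub]
      refine congrArg Matrix.diagonal (funext fun r => ?_)
      rw [← Complex.ofReal_sub]
      norm_cast
      rcases le_total (d r) 0 with h | h
      · rw [max_eq_right h, max_eq_left (by linarith)]; ring
      · rw [max_eq_left h, max_eq_right (by linarith)]; ring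
    rw [hd, Matrix.mul_sub, Matrix.sub_mul]

lemma psi_hermitian {n m ℓ : ℕ}
    (Φ : Fin ℓ → (Matrix (Fin n) (Fin n) ℂ →ₗ[ℂ] Matrix (Fin m) (Fin m) ℂ))
    (hΦpos : ∀ i, ∀ B : Matrix (Fin n) (Fin n) ℂ, B.PosSemidef → (Φ i B).PosSemidef)
    (α : Fin ℓ → ℝ) {B P Q : Matrix (Fin n) (Fin n) ℂ}
    (hP : P.PosSemidef) (hQ : Q.PosSemidef) (hB : B = P - Q) :
    (∑ i, (α i : ℂ) • Φ i B).IsHermitian := by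
  have hterm : ∀ i : Fin ℓ, ((α i : ℂ) • Φ i B).IsHermitian := by
    intro i
    have hΦB : (Φ i B).IsHermitian := by
      have : Φ i B = Φ i P - Φ i Q := by rw [hB, map_sub]
      rw [this]
      exact ((hΦpos i P hP).isHermitian).sub ((hΦpos i Q hQ).isHermitian)
    rw [Matrix.IsHermitian, Matrix.conjTranspose_smul, hΦB.eq]
    congr 1
    simp
  rw [Matrix.IsHermitian, Matrix.conjTranspose_sum]
  exact Finset.sum_congr rfl fun i _ => hterm i

lemma psi_posSemidef {n m ℓ : ℕ}
    (Φ : Fin ℓ → (Matrix (Fin n) (Fin n) ℂ →ₗ[ℂ] Matrix (Fin m) (Fin m) ℂ))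
    (hΦpos : ∀ i, ∀ B : Matrix (Fin n) (Fin n) ℂ, B.PosSemidef → (Φ i B).PosSemidef)
    (α : Fin ℓ → ℝ) (hα : ∀ i, 0 ≤ α i) {B : Matrix (Fin n) (Fin n) ℂ} (hB : B.PosSemidef) :
    (∑ i, (α i : ℂ) • Φ i B).PosSemidef := by
  refine Finset.sum_induction _ _ (fun x y hx hy => hx.add hy) Matrix.PosSemidef.zero ?_
  intro i _
  exact posSemidef_real_smul (hΦpos i B hB) (hα i)

lemma key_functional {n : ℕ} {A : Matrix (Fin n) (Fin n) ℂ} (hA : A.IsHermitian)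
    {J : Set ℝ} (h0 : (0 : ℝ) ∈ J) {f : ℝ → ℝ} (hf : ConvexOn ℝ J f) (hf0 : f 0 ≤ 0)
    (hspec : ∀ i, hA.eigenvalues i ∈ J)
    (φ : Matrix (Fin n) (Fin n) ℂ →ₗ[ℂ] ℂ)
    (hpos : ∀ B : Matrix (Fin n) (Fin n) ℂ, B.PosSemidef → 0 ≤ φ B)
    (hsub : (φ 1).re ≤ 1) :
    f ((φ A).re) ≤ (φ (matFun f A)).re := by
  set U : Matrix (Fin n) (Fin n) ℂ := (hA.eigenvectorUnitary : Matrix (Fin n) (Fin n) ℂ)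
    with hU
  set lamA := hA.eigenvalues with hlamA
  set P : Fin n → Matrix (Fin n) (Fin n) ℂ :=
    fun r => Matrix.of (fun i j => U i r * star (U j r)) with hP
  have hAeq : A = ∑ r, ((lamA r : ℂ)) • P r := by
    conv_lhs => rw [hA.spectral_theorem]
    rw [← unitary_diag_eq_sum_rankOne U (fun r => ((lamA r : ℂ)))]
    rfl
  have hfAeq : matFun f A = ∑ r, ((f (lamA r) : ℂ)) • P r := by
    rw [matFun, dif_pos hA, ← unitary_diag_eq_sum_rankOne U (fun r => ((f (lamA r) : ℂ)))]
  -- weights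
  set w : Fin n → ℝ := fun r => (φ (P r)).re with hw
  have hw0 : ∀ r, 0 ≤ w r := by
    intro r
    have := hpos (P r) (rankOne_posSemidef U r)
    rw [Complex.le_def] at this
    simpa using this.1
  have hwim : ∀ r, (φ (P r)).im = 0 := by
    intro r
    have := hpos (P r) (rankOne_posSemidef U r)
    rw [Complex.le_def] at this
    exact this.2.symm
  have hwsum : ∑ r, w r ≤ 1 := by
    have h1 : φ (1 : Matrix (Fin n) (Fin n) ℂ) = ∑ r, φ (P r) := by
      rw [← sum_rankOne_eq_one hA.eigenvectorUnitary.2, map_sum]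
    calc ∑ r, w r = (φ 1).re := by rw [h1, Complex.re_sum]
      _ ≤ 1 := hsub
  have hre : ∀ (c : Fin n → ℝ), (φ (∑ r, ((c r : ℂ)) • P r)).re = ∑ r, c r * w r := by
    intro c
    rw [map_sum, Complex.re_sum]
    refine Finset.sum_congr rfl fun r _ => ?_
    rw [_root_.map_smul, smul_eq_mul, Complex.mul_re]
    simp [hw]
  have hreA : (φ A).re = ∑ r, w r * lamA r := by
    rw [hAeq, hre lamA]
    exact Finset.sum_congr rfl fun r _ => mul_comm _ _
  have hrefA : (φ (matFun f A)).re = ∑ r, w r * f (lamA r) := by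
    rw [hfAeq, hre (fun r => f (lamA r))]
    exact Finset.sum_congr rfl fun r _ => mul_comm _ _
  -- Jensen's inequality with the extra weight at 0
  set W : Option (Fin n) → ℝ := fun o => o.elim (1 - ∑ r, w r) w with hWdef
  set pt : Option (Fin n) → ℝ := fun o => o.elim 0 lamA with hptdef
  have hW0 : ∀ o ∈ Finset.univ, 0 ≤ W o := by
    rintro (_ | r) _
    · simpa [hWdef] using sub_nonneg.mpr hwsum
    · exact hw0 r
  have hW1 : ∑ o, W o = 1 := by
    rw [Fintype.sum_option]
    simp [hWdef]
  have hmem : ∀ o ∈ Finset.univ, pt o ∈ J := by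
    rintro (_ | r) _
    · exact h0
    · exact hspec r
  have hjen := hf.map_sum_le hW0 hW1 hmem
  have hlhs : ∑ o, W o • pt o = (φ A).re := by
    rw [Fintype.sum_option, hreA]
    simp [hWdef, hptdef]
  rw [hlhs] at hjen
  refine hjen.trans ?_
  rw [Fintype.sum_option, hrefA]
  have : (W none) * f (pt none) ≤ 0 :=
    mul_nonpos_of_nonneg_of_nonpos (by simpa [hWdef] using sub_nonneg.mpr hwsum)
      (by simpa [hptdef] using hf0)
  have h2 : ∑ r, W (some r) * f (pt (some r)) = ∑ r, w r * f (lamA r) := by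
    simp [hWdef, hptdef]
  simp only [smul_eq_mul]
  linarith [this, le_of_eq h2]

/-- the entry-extraction linear functional `B ↦ (Vᴴ * (∑ i, αᵢ • Φᵢ B) * V) p p`. -/
noncomputable def entryFunctional {n m ℓ : ℕ}
    (Φ : Fin ℓ → (Matrix (Fin n) (Fin n) ℂ →ₗ[ℂ] Matrix (Fin m) (Fin m) ℂ))
    (α : Fin ℓ → ℝ) (V : Matrix (Fin m) (Fin m) ℂ) (p : Fin m) :
    Matrix (Fin n) (Fin n) ℂ →ₗ[ℂ] ℂ where
  toFun := fun B => (Vᴴ * (∑ i, (α i : ℂ) • Φ i B) * V) p p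
  map_add' := by
    intro B C
    simp only [map_add, smul_add, Finset.sum_add_distrib, Matrix.mul_add, Matrix.add_mul,
      Matrix.add_apply]
  map_smul' := by
    intro c B
    simp only [LinearMap.map_smul, RingHom.id_apply]
    rw [Finset.sum_congr rfl (fun i _ => smul_comm (α i : ℂ) c (Φ i B)),
      ← Finset.smul_sum, Matrix.mul_smul, Matrix.smul_mul, Matrix.smul_apply, smul_eq_mul]

/-- **Theorem (weak majorization).** For positive linear maps `Φᵢ : Mₙ(ℂ) → Mₘ(ℂ)`,
`αᵢ ≥ 0` with `0 ≤ ∑ αᵢ Φᵢ(Iₙ) ≤ Iₘ`, a Hermitian `A` with spectrum in an interval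
`J ∋ 0` and `f` convex on `J` with `f(0) ≤ 0`:
`∑_{j=1}^k λⱼ(f(∑ αᵢΦᵢ(A))) ≤ ∑_{j=1}^k λⱼ(∑ αᵢΦᵢ(f(A)))` for `1 ≤ k ≤ m`. -/
theorem weak_majorization_positive_maps {n m ℓ : ℕ}
    (A : Matrix (Fin n) (Fin n) ℂ) (hA : A.IsHermitian)
    (J : Set ℝ) (h0 : (0 : ℝ) ∈ J) (f : ℝ → ℝ) (hf : ConvexOn ℝ J f) (hf0 : f 0 ≤ 0)
    (hspec : ∀ i, hA.eigenvalues i ∈ J)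
    (Φ : Fin ℓ → (Matrix (Fin n) (Fin n) ℂ →ₗ[ℂ] Matrix (Fin m) (Fin m) ℂ))
    (hΦpos : ∀ i, ∀ B : Matrix (Fin n) (Fin n) ℂ, B.PosSemidef → (Φ i B).PosSemidef)
    (α : Fin ℓ → ℝ) (hα : ∀ i, 0 ≤ α i)
    (hsum0 : loewnerLE 0 (∑ i, (α i : ℂ) • Φ i 1))
    (hsum1 : loewnerLE (∑ i, (α i : ℂ) • Φ i 1) 1)
    (k : ℕ) (hk1 : 1 ≤ k) (hkm : k ≤ m) :
    ∑ j ∈ Finset.range k, lam (matFun f (∑ i, (α i : ℂ) • Φ i A)) j ≤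
      ∑ j ∈ Finset.range k, lam (∑ i, (α i : ℂ) • Φ i (matFun f A)) j := by
  classical
  -- Hermitian-ness of X := Ψ A
  obtain ⟨PA, QA, hPA, hQA, hAdec⟩ :
      ∃ P Q : Matrix (Fin n) (Fin n) ℂ, P.PosSemidef ∧ Q.PosSemidef ∧ A = P - Q := by
    obtain ⟨P, Q, hP, hQ, h⟩ := unitary_diag_decomp
      (hA.eigenvectorUnitary : Matrix (Fin n) (Fin n) ℂ) hA.eigenvalues
    refine ⟨P, Q, hP, hQ, ?_⟩
    rw [← h]
    conv_lhs => rw [hA.spectral_theorem]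
    rfl
  have hX : (∑ i, (α i : ℂ) • Φ i A).IsHermitian := psi_hermitian Φ hΦpos α hPA hQA hAdec
  set X : Matrix (Fin m) (Fin m) ℂ := ∑ i, (α i : ℂ) • Φ i A with hXdef
  set μ : Fin m → ℝ := hX.eigenvalues with hμ
  set UX : Matrix (Fin m) (Fin m) ℂ := (hX.eigenvectorUnitary : Matrix (Fin m) (Fin m) ℂ)
    with hUX
  have hUXmem : UX ∈ Matrix.unitaryGroup (Fin m) ℂ := hX.eigenvectorUnitary.2
  -- F := matFun f X
  have hFeq : matFun f X = UX * Matrix.diagonal (fun q => (f (μ q) : ℂ)) * UXᴴ := by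
    rw [matFun, dif_pos hX]
  have hF : (matFun f X).IsHermitian := by
    rw [hFeq]
    exact Matrix.isHermitian_mul_mul_conjTranspose UX
      (Matrix.isHermitian_diagonal_of_self_adjoint _
        (funext fun q => by simp [Complex.star_def]))
  set UF : Matrix (Fin m) (Fin m) ℂ := (hF.eigenvectorUnitary : Matrix (Fin m) (Fin m) ℂ)
    with hUF
  have hUFmem : UF ∈ Matrix.unitaryGroup (Fin m) ℂ := hF.eigenvectorUnitary.2
  -- Hermitian-ness of matFun f A and of G := Ψ (matFun f A)
  obtain ⟨PB, QB, hPB, hQB, hBdec⟩ :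
      ∃ P Q : Matrix (Fin n) (Fin n) ℂ, P.PosSemidef ∧ Q.PosSemidef ∧ matFun f A = P - Q := by
    obtain ⟨P, Q, hP, hQ, h⟩ := unitary_diag_decomp
      (hA.eigenvectorUnitary : Matrix (Fin n) (Fin n) ℂ) (fun r => f (hA.eigenvalues r))
    refine ⟨P, Q, hP, hQ, ?_⟩
    rw [← h, matFun, dif_pos hA]
  have hG : (∑ i, (α i : ℂ) • Φ i (matFun f A)).IsHermitian :=
    psi_hermitian Φ hΦpos α hPB hQB hBdec
  set G : Matrix (Fin m) (Fin m) ℂ := ∑ i, (α i : ℂ) • Φ i (matFun f A) with hGdef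
  set UG : Matrix (Fin m) (Fin m) ℂ := (hG.eigenvectorUnitary : Matrix (Fin m) (Fin m) ℂ)
    with hUG
  have hUGmem : UG ∈ Matrix.unitaryGroup (Fin m) ℂ := hG.eigenvectorUnitary.2
  -- lam = sortedDesc
  have hlamF : ∀ j, lam (matFun f X) j = sortedDesc hF.eigenvalues j := by
    intro j; rw [lam, dif_pos hF]; rfl
  have hlamG : ∀ j, lam G j = sortedDesc hG.eigenvalues j := by
    intro j; rw [lam, dif_pos hG]; rfl
  rw [Finset.sum_congr rfl fun j _ => hlamF j, Finset.sum_congr rfl fun j _ => hlamG j]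
  -- LHS as a subset sum
  obtain ⟨T0, hT0card, hT0⟩ := sortedDesc_topk_eq_subset_sum hkm hF.eigenvalues
  have heF : ∀ p, hF.eigenvalues p = ((UFᴴ * matFun f X * UF) p p).re := by
    intro p
    rw [← Matrix.star_eq_conjTranspose, show star UF * matFun f X * UF
        = diagonal (RCLike.ofReal ∘ hF.eigenvalues) from by
          simpa using hF.conjStarAlgAut_star_eigenvectorUnitary,
      Matrix.diagonal_apply_eq]
    simp
  rw [hT0, Finset.sum_congr rfl fun p _ => heF p]
  -- Ky Fan for the left side
  have step1 : ∑ p ∈ T0, ((UFᴴ * matFun f X * UF) p p).re ≤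
      ∑ j ∈ Finset.range k, sortedDesc (fun q => f (μ q)) j :=
    kyFanMatrix hkm hUXmem hUFmem (fun q => f (μ q)) hFeq T0 hT0card
  refine step1.trans ?_
  -- middle: subset sum for f ∘ μ
  obtain ⟨S, hScard, hS⟩ := sortedDesc_topk_eq_subset_sum hkm (fun q => f (μ q))
  rw [hS]
  -- pointwise step
  have step2 : ∀ p : Fin m, f (μ p) ≤ ((UXᴴ * G * UX) p p).re := by
    intro p
    have hpos : ∀ B : Matrix (Fin n) (Fin n) ℂ, B.PosSemidef →
        0 ≤ entryFunctional Φ α UX p B := by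
      intro B hB
      exact conj_entry_nonneg (psi_posSemidef Φ hΦpos α hα hB) UX p
    have hsub : ((entryFunctional Φ α UX p) 1).re ≤ 1 := by
      have h1 := conj_entry_nonneg hsum1 UX p
      rw [Complex.le_def] at h1
      have hexp : (UXᴴ * ((1 : Matrix (Fin m) (Fin m) ℂ) - ∑ i, (α i : ℂ) • Φ i 1) * UX) p p
          = 1 - (UXᴴ * (∑ i, (α i : ℂ) • Φ i 1) * UX) p p := by
        rw [Matrix.mul_sub, Matrix.sub_mul, Matrix.sub_apply, Matrix.mul_one,
          show UXᴴ * UX = 1 from (Matrix.mem_unitaryGroup_iff').mp hUXmem]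
        simp
      rw [loewnerLE] at *
      simp only [hexp, Complex.sub_re, Complex.one_re, Complex.zero_re] at h1
      have h2 := h1.1
      show ((UXᴴ * (∑ i, (α i : ℂ) • Φ i 1) * UX) p p).re ≤ 1
      linarith
    have hkey := key_functional hA h0 hf hf0 hspec (entryFunctional Φ α UX p) hpos hsub
    have hμval : ((entryFunctional Φ α UX p) A).re = μ p := by
      have : (UXᴴ * X * UX) p p = ((μ p : ℝ) : ℂ) := by
        rw [← Matrix.star_eq_conjTranspose, show star UX * X * UX
            = diagonal (RCLike.ofReal ∘ hX.eigenvalues) from by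
              simpa using hX.conjStarAlgAut_star_eigenvectorUnitary,
          Matrix.diagonal_apply_eq]
        rfl
      simp only [entryFunctional, LinearMap.coe_mk, AddHom.coe_mk, ← hXdef, this,
        Complex.ofReal_re]
    rw [hμval] at hkey
    exact hkey
  refine (Finset.sum_le_sum fun p _ => step2 p).trans ?_
  -- Ky Fan for the right side
  have hGeq : G = UG * Matrix.diagonal (fun q => (hG.eigenvalues q : ℂ)) * UGᴴ := by
    conv_lhs => rw [hG.spectral_theorem]
    rfl
  exact kyFanMatrix hkm hUGmem hUXmem hG.eigenvalues hGeq S hScard
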